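/- Let q ≥ 1 and k a field. Consider the k-algebra A_q = k[y₁,…,y_q]/((yᵢyⱼ : i ≠ j) + (yᵢ² − yⱼ² : i ≠ j) + (y₁³)). Then A_q is a free k-module of rank q+2 with basis 1, y₁, …, y_q, y₁², and the linear functional φ₀ dual to y₁² in this basis (φ₀(y₁²) = 1, φ₀(1) = φ₀(yᵢ) = 0) satisfies: B_{φ₀}(a,b) = φ₀(ab) is a non-degenerate symmetric bilinear form on A_q. -/

import Mathlib

open MvPolynomial

section GFP
variable (k : Type*) [Field k] (q : ℕ)

def GFP : Type _ := k × (Fin q → k) × k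

instance : AddCommGroup (GFP k q) := inferInstanceAs (AddCommGroup (k × (Fin q → k) × k))
instance : Module k (GFP k q) := inferInstanceAs (Module k (k × (Fin q → k) × k))

variable {k q} in
abbrev GFP.mk (a : k) (v : Fin q → k) (c : k) : GFP k q := (a, v, c)

variable {k q} in
def GFP.mul (x y : GFP k q) : GFP k q :=
  GFP.mk (x.1 * y.1) (x.1 • y.2.1 + y.1 • x.2.1)
    (x.1 * y.2.2 + y.1 * x.2.2 + ∑ i, x.2.1 i * y.2.1 i)

instance : Mul (GFP k q) := ⟨GFP.mul⟩
instance : One (GFP k q) := ⟨GFP.mk 1 0 0⟩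

variable {k q}

lemma GFP.mul_def (x y : GFP k q) :
    x * y = GFP.mk (x.1 * y.1) (x.1 • y.2.1 + y.1 • x.2.1)
      (x.1 * y.2.2 + y.1 * x.2.2 + ∑ i, x.2.1 i * y.2.1 i) := rfl

lemma GFP.one_def : (1 : GFP k q) = GFP.mk 1 0 0 := rfl

lemma GFP.add_def (x y : GFP k q) : x + y = GFP.mk (x.1 + y.1) (x.2.1 + y.2.1) (x.2.2 + y.2.2) := rfl
lemma GFP.smul_def (r : k) (x : GFP k q) : r • x = GFP.mk (r * x.1) (r • x.2.1) (r * x.2.2) := rfl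
lemma GFP.zero_def : (0 : GFP k q) = GFP.mk 0 0 0 := rfl

variable (k q)

instance : CommRing (GFP k q) where
  __ := (inferInstance : AddCommGroup (GFP k q))
  mul := GFP.mul
  one := GFP.mk 1 0 0
  mul_assoc x y z := by
    refine Prod.ext ?_ (Prod.ext (funext fun i => ?_) ?_) <;>
      simp [GFP.mul_def, GFP.add_def, Pi.add_apply, Pi.smul_apply, smul_eq_mul,
        Finset.mul_sum, Finset.sum_add_distrib, mul_add, add_mul] <;> ring_nf <;>
      simp [Finset.mul_sum, mul_comm, mul_left_comm, mul_assoc] <;> abel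
  one_mul x := by
    refine Prod.ext ?_ (Prod.ext (funext fun i => ?_) ?_) <;>
      simp [GFP.mul_def, GFP.one_def]
  mul_one x := by
    refine Prod.ext ?_ (Prod.ext (funext fun i => ?_) ?_) <;>
      simp [GFP.mul_def, GFP.one_def]
  left_distrib x y z := by
    refine Prod.ext ?_ (Prod.ext (funext fun i => ?_) ?_) <;>
      simp [GFP.mul_def, GFP.add_def, Pi.add_apply, Pi.smul_apply, smul_eq_mul,
        Finset.sum_add_distrib, mul_add] <;> ring_nf
  right_distrib x y z := by
    refine Prod.ext ?_ (Prod.ext (funext fun i => ?_) ?_) <;>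
      simp [GFP.mul_def, GFP.add_def, Pi.add_apply, Pi.smul_apply, smul_eq_mul,
        Finset.sum_add_distrib, mul_add, add_mul] <;> ring_nf
  zero_mul x := by
    refine Prod.ext ?_ (Prod.ext (funext fun i => ?_) ?_) <;>
      simp [GFP.mul_def, GFP.zero_def]
  mul_zero x := by
    refine Prod.ext ?_ (Prod.ext (funext fun i => ?_) ?_) <;>
      simp [GFP.mul_def, GFP.zero_def]
  mul_comm x y := by
    refine Prod.ext ?_ (Prod.ext (funext fun i => ?_) ?_) <;>
      simp [GFP.mul_def, Pi.add_apply, Pi.smul_apply, smul_eq_mul, mul_comm] <;> ring_nf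

instance : Algebra k (GFP k q) := Algebra.ofModule
  (fun r x y => by
    refine Prod.ext ?_ (Prod.ext (funext fun i => ?_) ?_) <;>
      simp [GFP.mul_def, GFP.smul_def, Pi.add_apply, Pi.smul_apply, smul_eq_mul,
        Finset.mul_sum] <;> ring_nf <;> simp [Finset.mul_sum, mul_comm, mul_left_comm] <;>
      exact Finset.sum_congr rfl fun i _ => mul_assoc _ _ _)
  (fun r x y => by
    refine Prod.ext ?_ (Prod.ext (funext fun i => ?_) ?_) <;>
      simp [GFP.mul_def, GFP.smul_def, Pi.add_apply, Pi.smul_apply, smul_eq_mul,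
        Finset.mul_sum] <;> ring_nf <;> simp [Finset.mul_sum, mul_comm, mul_left_comm] <;>
      exact Finset.sum_congr rfl fun i _ => mul_assoc _ _ _)

lemma GFP.algebraMap_def (r : k) : (algebraMap k (GFP k q)) r = GFP.mk r 0 0 := by
  refine Prod.ext ?_ (Prod.ext (funext fun i => ?_) ?_) <;>
    simp [Algebra.algebraMap_eq_smul_one, GFP.smul_def, GFP.one_def]

end GFP

section Aux
variable {k : Type*} [Field k] {q : ℕ}

def GFP.gen (i : Fin q) : GFP k q := GFP.mk 0 (Pi.single i 1) 0

lemma GFP.gen_mul_gen (i j : Fin q) :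
    (GFP.gen i : GFP k q) * GFP.gen j = GFP.mk 0 0 (if i = j then 1 else 0) := by
  rw [GFP.mul_def]
  simp [GFP.gen, Pi.single_apply, mul_ite, ite_mul,
    Finset.sum_ite_eq, Finset.sum_ite_eq', eq_comm]

lemma GFP.gen_sq (i : Fin q) : (GFP.gen i : GFP k q) ^ 2 = GFP.mk 0 0 1 := by
  rw [pow_two, GFP.gen_mul_gen]; simp

lemma GFP.gen_cube (i : Fin q) : (GFP.gen i : GFP k q) ^ 3 = 0 := by
  have : (GFP.gen i : GFP k q) ^ 3 = (GFP.gen i) ^ 2 * GFP.gen i := by ring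
  rw [this, GFP.gen_sq, GFP.mul_def, GFP.zero_def, GFP.gen]
  simp

variable (k q) in
def GFPflat : GFP k q →ₗ[k] (Fin (q + 2) → k) where
  toFun x := fun m =>
    if h0 : (m : ℕ) = 0 then x.1
    else if h1 : (m : ℕ) = q + 1 then x.2.2
    else x.2.1 ⟨(m : ℕ) - 1, by have := m.isLt; omega⟩
  map_add' x y := by
    funext m
    by_cases h0 : (m : ℕ) = 0 <;> by_cases h1 : (m : ℕ) = q + 1 <;>
      simp [GFP.add_def, h0, h1, ← Fin.val_eq_zero_iff]
  map_smul' r x := by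
    funext m
    by_cases h0 : (m : ℕ) = 0 <;> by_cases h1 : (m : ℕ) = q + 1 <;>
      simp [GFP.smul_def, h0, h1, ← Fin.val_eq_zero_iff]

lemma GFPflat_apply (x : GFP k q) (m : Fin (q + 2)) :
    GFPflat k q x m =
      if h0 : (m : ℕ) = 0 then x.1
      else if h1 : (m : ℕ) = q + 1 then x.2.2
      else x.2.1 ⟨(m : ℕ) - 1, by have := m.isLt; omega⟩ := rfl

end Aux

set_option maxHeartbeats 2000000 in
set_option synthInstance.maxHeartbeats 400000 in
theorem gFatPoint_oriented_gorenstein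
    (k : Type*) [Field k] (q : ℕ) (hq : 0 < q)
    (I : Ideal (MvPolynomial (Fin q) k))
    (hI : I = Ideal.span
      ({p | ∃ i j : Fin q, i ≠ j ∧ p = X i * X j} ∪
       {p | ∃ i j : Fin q, i ≠ j ∧ p = X i ^ 2 - X j ^ 2} ∪
       {X (⟨0, hq⟩ : Fin q) ^ 3})) :
    ∃ b : Module.Basis (Fin (q + 2)) k (MvPolynomial (Fin q) k ⧸ I),
      b ⟨0, by omega⟩ = 1 ∧
      (∀ i : Fin q, b ⟨i.1 + 1, by omega⟩ = Ideal.Quotient.mk I (X i)) ∧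
      b ⟨q + 1, by omega⟩ = Ideal.Quotient.mk I (X (⟨0, hq⟩ : Fin q)) ^ 2 ∧
      Function.Bijective
        (fun a : MvPolynomial (Fin q) k ⧸ I =>
          (b.coord ⟨q + 1, by omega⟩) ∘ₗ
            LinearMap.mul k (MvPolynomial (Fin q) k ⧸ I) a) := by
  set R := MvPolynomial (Fin q) k with hR
  set Q := R ⧸ I with hQ
  set mk : R →+* Q := Ideal.Quotient.mk I with hmk
  set z : Fin q := ⟨0, hq⟩ with hz
  set x : Fin q → Q := fun i => mk (X i) with hx
  set t : Q := mk (X z ^ 2) with ht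
  have hz0 : ((⟨0, hq⟩ : Fin q) : ℕ) = 0 := rfl
  -- membership facts
  have hmem : ∀ p : R, p ∈ ({p | ∃ i j : Fin q, i ≠ j ∧ p = X i * X j} ∪
       {p | ∃ i j : Fin q, i ≠ j ∧ p = X i ^ 2 - X j ^ 2} ∪
       {X (⟨0, hq⟩ : Fin q) ^ 3} : Set R) → mk p = 0 := by
    intro p hp
    rw [hmk, Ideal.Quotient.eq_zero_iff_mem, hI]
    exact Ideal.subset_span hp
  -- relations
  have hr1 : ∀ i j : Fin q, i ≠ j → x i * x j = 0 := by
    intro i j hij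
    rw [hx]; dsimp only
    rw [← map_mul]
    exact hmem _ (Or.inl (Or.inl ⟨i, j, hij, rfl⟩))
  have hr2 : ∀ i : Fin q, x i * x i = t := by
    intro i
    by_cases hiz : i = z
    · rw [hiz, ht, hx]; dsimp only; rw [← map_mul]; congr 1; ring
    · have h0 : mk (X i ^ 2 - X z ^ 2) = 0 :=
        hmem _ (Or.inl (Or.inr ⟨i, z, hiz, rfl⟩))
      rw [map_sub, sub_eq_zero] at h0
      rw [hx]; dsimp only; rw [← map_mul, ht, ← h0]; congr 1; ring
  have hr3 : ∀ i : Fin q, t * x i = 0 := by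
    intro i
    by_cases hiz : i = z
    · rw [hiz, ht, hx]; dsimp only; rw [← map_mul]
      have : (X z ^ 2 * X z : R) = X z ^ 3 := by ring
      rw [this]
      exact hmem _ (Or.inr rfl)
    · have : t * x i = mk (X z) * (x z * x i) := by
        rw [ht, hx]; dsimp only; rw [← map_mul, ← map_mul, ← map_mul]; congr 1; ring
      rw [this, hr1 z i (fun h => hiz h.symm), mul_zero]
  have hr4 : t * t = 0 := by
    have h : t * t = t * (x z * x z) := by rw [hr2]
    rw [h, ← mul_assoc, hr3, zero_mul]
  -- the basis family
  set v : Fin (q + 2) → Q := fun m =>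
    if h0 : (m : ℕ) = 0 then 1
    else if h1 : (m : ℕ) = q + 1 then t
    else x ⟨(m : ℕ) - 1, by have := m.isLt; omega⟩ with hv
  have hv0 : v ⟨0, by omega⟩ = 1 := by simp [hv]
  have hvq : v ⟨q + 1, by omega⟩ = t := by simp [hv]
  have hvi : ∀ i : Fin q, v ⟨i.1 + 1, by omega⟩ = x i := by
    intro i
    have h0 : (i.1 + 1) ≠ 0 := by omega
    have h1 : (i.1 + 1) ≠ q + 1 := by have := i.isLt; omega
    simp only [hv, h0, h1, dite_false, dif_neg]
    congr 1
  -- the evaluation algebra map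
  set e₀ : R →ₐ[k] GFP k q := aeval (GFP.gen (k := k) (q := q)) with he₀
  have hgenX : ∀ i : Fin q, e₀ (X i) = GFP.gen i := fun i => by rw [he₀]; exact aeval_X _ i
  have hkill : ∀ a ∈ I, e₀ a = 0 := by
    have hle : I ≤ RingHom.ker e₀.toRingHom := by
      rw [hI, Ideal.span_le]
      rintro p ((⟨i, j, hij, rfl⟩ | ⟨i, j, hij, rfl⟩) | rfl) <;>
        simp only [SetLike.mem_coe, RingHom.mem_ker, AlgHom.toRingHom_eq_coe,
          RingHom.coe_coe, map_mul, map_sub, map_pow]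
      · rw [hgenX, hgenX, GFP.gen_mul_gen]; simp [hij, GFP.zero_def]
      · rw [hgenX, hgenX, GFP.gen_sq, GFP.gen_sq, sub_self]
      · rw [hgenX]; exact GFP.gen_cube z
    intro a ha
    exact hle ha
  set e : Q →ₐ[k] GFP k q := Ideal.Quotient.liftₐ I e₀ hkill with he
  have hemk : ∀ p : R, e (mk p) = e₀ p := by
    intro p
    rw [he, hmk, Ideal.Quotient.liftₐ_apply]
    rfl
  -- values of e on the family
  have hex : ∀ i : Fin q, e (x i) = GFP.gen i := by
    intro i; rw [hx]; dsimp only; rw [hemk]; exact hgenX i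
  have het : e t = GFP.mk 0 0 1 := by
    rw [ht, hemk, map_pow, hgenX, GFP.gen_sq]
  have he1 : e 1 = GFP.mk 1 0 0 := by rw [map_one]; rfl
  -- linear independence
  have hli : LinearIndependent k v := by
    apply LinearIndependent.of_comp ((GFPflat k q) ∘ₗ e.toLinearMap)
    have hcomp : (⇑((GFPflat k q) ∘ₗ e.toLinearMap)) ∘ v
        = ⇑(Pi.basisFun k (Fin (q + 2))) := by
      funext m n
      simp only [Function.comp_apply, LinearMap.coe_comp, AlgHom.toLinearMap_apply,
        Pi.basisFun_apply]
      rcases m with ⟨mv, hm⟩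
      rcases n with ⟨nv, hn⟩
      by_cases hm0 : mv = 0
      · subst hm0
        have hvm : v ⟨0, hm⟩ = 1 := by simp [hv]
        rw [hvm, he1]
        simp only [GFPflat_apply]
        by_cases hn0 : nv = 0
        · subst hn0; simp [Pi.single_apply]
        · by_cases hn1 : nv = q + 1 <;>
            simp [hn0, hn1, Pi.single_apply, Fin.ext_iff, Ne.symm hn0]
      · by_cases hm1 : mv = q + 1
        · subst hm1
          have hvm : v ⟨q + 1, hm⟩ = t := by simp [hv]
          rw [hvm, het]
          simp only [GFPflat_apply]
          by_cases hn0 : nv = 0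
          · subst hn0
            simp [Pi.single_apply, Fin.ext_iff]
          · by_cases hn1 : nv = q + 1 <;>
              simp [hn0, hn1, Pi.single_apply, Fin.ext_iff] <;> omega
        · have hmv1 : mv - 1 < q := by omega
          have hvm : v ⟨mv, hm⟩ = x ⟨mv - 1, hmv1⟩ := by
            simp only [hv]
            rw [dif_neg (show ¬((⟨mv, hm⟩ : Fin (q + 2)) : ℕ) = 0 from hm0),
              dif_neg (show ¬((⟨mv, hm⟩ : Fin (q + 2)) : ℕ) = q + 1 from hm1)]
          rw [hvm, hex]
          simp only [GFPflat_apply, GFP.gen]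
          by_cases hn0 : nv = 0
          · subst hn0; simp [Pi.single_apply, Fin.ext_iff]
            omega
          · by_cases hn1 : nv = q + 1
            · simp [hn0, hn1, Pi.single_apply, Fin.ext_iff]
              omega
            · simp only [hn0, hn1, dite_false, dif_neg, Pi.single_apply, Fin.ext_iff,
                not_false_eq_true]
              by_cases hmn : nv = mv
              · simp [hmn]
              · have h2 : ¬(nv - 1 = mv - 1) := by omega
                simp [hmn, h2]
    rw [hcomp]
    exact (Pi.basisFun k (Fin (q + 2))).linearIndependent
  -- general value lemmas for v
  have hv0' : ∀ hm : (0 : ℕ) < q + 2, v ⟨0, hm⟩ = 1 := fun hm => by simp [hv]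
  have hvq' : ∀ hm : q + 1 < q + 2, v ⟨q + 1, hm⟩ = t := fun hm => by simp [hv]
  have hvm' : ∀ (mv : ℕ) (hm : mv < q + 2) (h0 : mv ≠ 0) (h1 : mv ≠ q + 1)
      (h : mv - 1 < q), v ⟨mv, hm⟩ = x ⟨mv - 1, h⟩ := by
    intro mv hm h0 h1 h
    simp only [hv]
    rw [dif_neg (show ¬((⟨mv, hm⟩ : Fin (q + 2)) : ℕ) = 0 from h0),
      dif_neg (show ¬((⟨mv, hm⟩ : Fin (q + 2)) : ℕ) = q + 1 from h1)]
  -- spanning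
  have hmulx : ∀ (i : Fin q), ∀ a ∈ Submodule.span k (Set.range v),
      a * x i ∈ Submodule.span k (Set.range v) := by
    intro i a ha
    induction ha using Submodule.span_induction with
    | mem a hmem' =>
      obtain ⟨⟨mv, hm⟩, rfl⟩ := hmem'
      by_cases hm0 : mv = 0
      · subst hm0
        rw [hv0' hm, one_mul]
        exact Submodule.subset_span ⟨⟨i.1 + 1, by omega⟩, hvi i⟩
      · by_cases hm1 : mv = q + 1
        · subst hm1
          rw [hvq' hm, hr3]
          exact Submodule.zero_mem _
        · rw [hvm' mv hm hm0 hm1 (by omega)]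
          by_cases hmi : (⟨mv - 1, by omega⟩ : Fin q) = i
          · rw [hmi, hr2]
            exact Submodule.subset_span ⟨⟨q + 1, by omega⟩, hvq' _⟩
          · rw [hr1 _ _ hmi]
            exact Submodule.zero_mem _
    | zero => rw [zero_mul]; exact Submodule.zero_mem _
    | add a c _ _ ha hc => rw [add_mul]; exact Submodule.add_mem _ ha hc
    | smul r a _ ha => rw [smul_mul_assoc]; exact Submodule.smul_mem _ r ha
  have hspan : ∀ p : R, mk p ∈ Submodule.span k (Set.range v) := by
    intro p
    induction p using MvPolynomial.induction_on with
    | C a =>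
      have h2 : (Ideal.Quotient.mkₐ k I) (a • (1 : R)) = a • ((Ideal.Quotient.mkₐ k I) (1 : R)) :=
        map_smul _ _ _
      rw [map_one] at h2
      have h1 : mk (C a) = a • (1 : Q) := by
        rw [← h2]
        show mk (C a) = mk (a • (1 : R))
        congr 1
        rw [MvPolynomial.smul_eq_C_mul, mul_one]
      rw [h1]
      exact Submodule.smul_mem _ a (Submodule.subset_span ⟨⟨0, by omega⟩, hv0' _⟩)
    | add p1 p2 h1 h2 => rw [map_add]; exact Submodule.add_mem _ h1 h2
    | mul_X p1 i h1 => rw [map_mul]; exact hmulx i _ h1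
  have htop : ⊤ ≤ Submodule.span k (Set.range v) := by
    intro a _
    obtain ⟨p, rfl⟩ := Ideal.Quotient.mk_surjective a
    exact hspan p
  set b : Module.Basis (Fin (q + 2)) k Q := Module.Basis.mk hli htop with hb
  have hbm : ∀ m : Fin (q + 2), b m = v m := fun m => by rw [hb, Module.Basis.mk_apply]
  refine ⟨b, ?_, ?_, ?_, ?_⟩
  · rw [hbm, hv0']
  · intro i
    rw [hbm]
    have := hvi i
    rw [this]
  · rw [hbm, hvq' (by omega), ht, map_pow]
  -- bijectivity
  have hbt : b ⟨q + 1, by omega⟩ = t := by rw [hbm, hvq']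
  have hb0 : b ⟨0, by omega⟩ = 1 := by rw [hbm, hv0']
  have hbi : ∀ i : Fin q, b ⟨i.1 + 1, by omega⟩ = x i := fun i => by rw [hbm, hvi]
  set idx : Fin (q + 2) := ⟨q + 1, by omega⟩ with hidx
  set φ : Q →ₗ[k] k := b.coord idx with hφ
  -- products of basis vectors
  have hbmul_t : ∀ m : Fin (q + 2), b m * t = if m = ⟨0, by omega⟩ then t else 0 := by
    rintro ⟨mv, hm⟩
    by_cases hm0 : mv = 0
    · subst hm0
      rw [hbm, hv0' hm, one_mul, if_pos rfl]
    · rw [if_neg (by simp [Fin.ext_iff, hm0])]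
      by_cases hm1 : mv = q + 1
      · subst hm1
        rw [hbm, hvq' hm, hr4]
      · rw [hbm, hvm' mv hm hm0 hm1 (by omega), mul_comm, hr3]
  have hbmul_x : ∀ (i : Fin q) (m : Fin (q + 2)),
      b m * x i = if m = ⟨0, by omega⟩ then x i
        else if m = ⟨i.1 + 1, by omega⟩ then t else 0 := by
    rintro i ⟨mv, hm⟩
    by_cases hm0 : mv = 0
    · subst hm0
      rw [hbm, hv0' hm, one_mul, if_pos rfl]
    · rw [if_neg (by simp [Fin.ext_iff, hm0])]
      by_cases hm1 : mv = q + 1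
      · subst hm1
        rw [hbm, hvq' hm, hr3, if_neg (by simp [Fin.ext_iff]; have := i.isLt; omega)]
      · rw [hbm, hvm' mv hm hm0 hm1 (by omega)]
        by_cases hmi : mv = i.1 + 1
        · rw [if_pos (by simp [Fin.ext_iff, hmi])]
          have : (⟨mv - 1, by omega⟩ : Fin q) = i := by simp [Fin.ext_iff]; omega
          rw [this, hr2]
        · rw [if_neg (by simp [Fin.ext_iff, hmi]), hr1]
          simp only [ne_eq, Fin.ext_iff]
          omega
  -- evaluation formulas
  have hmul_t : ∀ a : Q, a * t = b.repr a ⟨0, by omega⟩ • t := by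
    intro a
    conv_lhs => rw [← Module.Basis.sum_repr b a]
    rw [Finset.sum_mul]
    rw [Finset.sum_eq_single (⟨0, by omega⟩ : Fin (q + 2))]
    · rw [smul_mul_assoc, hbmul_t, if_pos rfl]
    · intro m _ hm
      rw [smul_mul_assoc, hbmul_t, if_neg hm, smul_zero]
    · intro h; exact absurd (Finset.mem_univ _) h
  have hmul_x : ∀ (a : Q) (i : Fin q),
      a * x i = b.repr a ⟨0, by omega⟩ • x i + b.repr a ⟨i.1 + 1, by omega⟩ • t := by
    intro a i
    conv_lhs => rw [← Module.Basis.sum_repr b a]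
    rw [Finset.sum_mul]
    have hterm : ∀ m : Fin (q + 2),
        (b.repr a m • b m) * x i =
          (if m = ⟨0, by omega⟩ then b.repr a m • x i else 0) +
          (if m = ⟨i.1 + 1, by omega⟩ then b.repr a m • t else 0) := by
      intro m
      rw [smul_mul_assoc, hbmul_x]
      by_cases h0 : m = ⟨0, by omega⟩
      · rw [if_pos h0, if_pos h0, if_neg (by rw [h0]; simp [Fin.ext_iff]), add_zero]
      · rw [if_neg h0, if_neg h0, zero_add]
        by_cases h1 : m = ⟨i.1 + 1, by omega⟩
        · rw [if_pos h1, if_pos h1]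
        · rw [if_neg h1, if_neg h1, smul_zero]
    rw [Finset.sum_congr rfl (fun m _ => hterm m), Finset.sum_add_distrib]
    congr 1 <;> simp only [Finset.sum_ite_eq', Finset.sum_ite_eq, Finset.mem_univ, if_true]
  -- coordinate values
  have hφt : φ t = 1 := by
    rw [hφ, ← hbt, Module.Basis.coord_apply, Module.Basis.repr_self, Finsupp.single_eq_same]
  have hφx : ∀ i : Fin q, φ (x i) = 0 := by
    intro i
    rw [hφ, ← hbi i, Module.Basis.coord_apply, Module.Basis.repr_self]
    rw [Finsupp.single_apply, if_neg (by simp [hidx, Fin.ext_iff]; have := i.isLt; omega)]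
  -- the linear map
  set L : Q →ₗ[k] Module.Dual k Q :=
    (LinearMap.llcomp k Q Q k φ).comp (LinearMap.mul k Q) with hL
  have hLa : ∀ a c : Q, L a c = φ (a * c) := fun a c => rfl
  have hker : ∀ a : Q, L a = 0 → a = 0 := by
    intro a ha
    have h00 : b.repr a ⟨0, by omega⟩ = 0 := by
      have := congrArg (fun f : Module.Dual k Q => f t) ha
      simp only [LinearMap.zero_apply] at this
      rw [hLa, hmul_t, map_smul, smul_eq_mul, hφt, mul_one] at this
      exact this
    have hqq : b.repr a idx = 0 := by
      have := congrArg (fun f : Module.Dual k Q => f 1) ha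
      simp only [LinearMap.zero_apply] at this
      rw [hLa, mul_one] at this
      exact this
    have hii : ∀ i : Fin q, b.repr a ⟨i.1 + 1, by omega⟩ = 0 := by
      intro i
      have := congrArg (fun f : Module.Dual k Q => f (x i)) ha
      simp only [LinearMap.zero_apply] at this
      rw [hLa, hmul_x, map_add, map_smul, map_smul, smul_eq_mul, smul_eq_mul,
        hφt, hφx, mul_one, mul_zero, zero_add] at this
      exact this
    have hrz : b.repr a = 0 := by
      ext m
      rcases m with ⟨mv, hm⟩
      by_cases hm0 : mv = 0
      · subst hm0; exact h00
      · by_cases hm1 : mv = q + 1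
        · subst hm1; exact hqq
        · have hlt : mv - 1 < q := by omega
          have hmm : (⟨mv, hm⟩ : Fin (q + 2)) = ⟨(⟨mv - 1, hlt⟩ : Fin q).1 + 1, by omega⟩ := by
            simp [Fin.ext_iff]; omega
          rw [hmm]
          exact hii ⟨mv - 1, hlt⟩
    have := congrArg b.repr.symm hrz
    rwa [LinearEquiv.symm_apply_apply, map_zero] at this
  have hinj : Function.Injective L :=
    LinearMap.ker_eq_bot.mp (LinearMap.ker_eq_bot'.mpr hker)
  have hfin : FiniteDimensional k Q := Module.Finite.of_basis b
  have hfr : Module.finrank k Q = Module.finrank k (Module.Dual k Q) :=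
    (Subspace.dual_finrank_eq).symm
  have hsurj : Function.Surjective L :=
    (LinearMap.injective_iff_surjective_of_finrank_eq_finrank hfr).mp hinj
  exact ⟨hinj, hsurj⟩
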